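/- arXiv:2408.02700 — 3 statements merged into one kernel-verified Lean document; each statement's English description precedes it below -/
import Mathlib

section
/- Let D be the trapezoidal fuzzy variable (r1,r2,r3,r4) with 0 < r1 < r2 ≤ r3 < r4. Then the credibilistic expected value (the case λ = 1/2) satisfies E_C(1/D) = ∫_0^∞ m_{1/2}(D ≤ 1/r) dr = (1/(2(r2 − r1)))·ln(r2/r1) + (1/(2(r4 − r3)))·ln(r4/r3). -/
open MeasureTheory Set

/-- Possibility measure of an event `A` built from membership function `μ`
(with the convention `sSup ∅ = 0`, which holds for `Real.sSup`). -/
noncomputable def Pos (μ : ℝ → ℝ) (A : Set ℝ) : ℝ := sSup (μ '' A)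

/-- Necessity measure associated with `μ`. -/
noncomputable def Nec (μ : ℝ → ℝ) (A : Set ℝ) : ℝ := 1 - Pos μ Aᶜ

/-- The parametric measure `m_λ(A) = λ·Pos(A) + (1−λ)·Nec(A)`. -/
noncomputable def mMeas (l : ℝ) (μ : ℝ → ℝ) (A : Set ℝ) : ℝ :=
  l * Pos μ A + (1 - l) * Nec μ A

/-- The `m_λ`-expected value of the fuzzy variable with membership function `μ`:
`E_λ(ξ) = ∫_{−∞}^0 (m_λ([r,∞)) − 1) dr + ∫_0^∞ m_λ([r,∞)) dr`. -/
noncomputable def Eexp (l : ℝ) (μ : ℝ → ℝ) : ℝ :=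
  (∫ r in Set.Iic (0:ℝ), (mMeas l μ (Set.Ici r) - 1)) +
  (∫ r in Set.Ioi (0:ℝ), mMeas l μ (Set.Ici r))

/-- Membership function of the trapezoidal fuzzy variable `(r1,r2,r3,r4)`. -/
noncomputable def trapMF (r1 r2 r3 r4 : ℝ) : ℝ → ℝ := fun x =>
  if r1 ≤ x ∧ x ≤ r2 then (x - r1) / (r2 - r1)
  else if r2 ≤ x ∧ x ≤ r3 then 1
  else if r3 ≤ x ∧ x ≤ r4 then (r4 - x) / (r4 - r3)
  else 0

/-- Membership function of the triangular fuzzy variable `(r1,r2,r4)`. -/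
noncomputable def triMF (r1 r2 r4 : ℝ) : ℝ → ℝ := fun x =>
  if r1 ≤ x ∧ x ≤ r2 then (x - r1) / (r2 - r1)
  else if r2 ≤ x ∧ x ≤ r4 then (r4 - x) / (r4 - r2)
  else 0

/-- Membership function of the trapezoidal fuzzy variable `(a−α, a, b, b+β)`. -/
noncomputable def trapMF2 (a b α β : ℝ) : ℝ → ℝ := fun x =>
  if a - α ≤ x ∧ x ≤ a then 1 - (a - x) / α
  else if a ≤ x ∧ x ≤ b then 1
  else if b ≤ x ∧ x ≤ b + β then 1 - (x - b) / β
  else 0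

/-- Membership function of the triangular fuzzy variable `(a−α, a, a+β)`. -/
noncomputable def triMF2 (a α β : ℝ) : ℝ → ℝ := fun x =>
  if a - α ≤ x ∧ x ≤ a then 1 - (a - x) / α
  else if a ≤ x ∧ x ≤ a + β then 1 - (x - a) / β
  else 0

set_option linter.unusedSectionVars false

section sup
variable {r1 r2 r3 r4 : ℝ} (h0 : 0 < r1) (h12 : r1 < r2) (h23 : r2 ≤ r3) (h34 : r3 < r4)
include h0 h12 h23 h34

lemma mu_le_one : ∀ x, trapMF r1 r2 r3 r4 x ≤ 1 := by
  intro x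
  unfold trapMF
  split_ifs with h1 h2 h3
  · rw [div_le_one (by linarith)]; linarith [h1.2]
  · exact le_rfl
  · rw [div_le_one (by linarith)]; linarith [h3.1]
  · exact zero_le_one

lemma bdd_img (A : Set ℝ) : BddAbove (trapMF r1 r2 r3 r4 '' A) :=
  ⟨1, fun y hy => by obtain ⟨x, -, rfl⟩ := hy; exact mu_le_one h0 h12 h23 h34 x⟩

lemma posIic_lt {t : ℝ} (ht : t < r1) : sSup (trapMF r1 r2 r3 r4 '' Iic t) = 0 := by
  apply le_antisymm
  · apply Real.sSup_le _ le_rfl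
    rintro y ⟨x, hx, rfl⟩
    simp only [mem_Iic] at hx
    unfold trapMF
    split_ifs with h1 h2 h3 <;> [linarith [h1.1]; linarith [h2.1]; linarith [h3.1]; exact le_rfl]
  · apply le_csSup (bdd_img h0 h12 h23 h34 _)
    refine ⟨t, mem_Iic.2 le_rfl, ?_⟩
    unfold trapMF
    rw [if_neg (by push_neg; intro h; linarith), if_neg (by push_neg; intro h; linarith),
      if_neg (by push_neg; intro h; linarith)]

lemma posIic_mid {t : ℝ} (ht1 : r1 ≤ t) (ht2 : t ≤ r2) :
    sSup (trapMF r1 r2 r3 r4 '' Iic t) = (t - r1) / (r2 - r1) := by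
  apply le_antisymm
  · apply csSup_le (Set.Nonempty.image _ nonempty_Iic)
    rintro y ⟨x, hx, rfl⟩
    simp only [mem_Iic] at hx
    unfold trapMF
    split_ifs with h1 h2 h3
    · gcongr
    · rw [le_div_iff₀ (by linarith)]; nlinarith [h2.1]
    · exact absurd ⟨by linarith [h3.1], by linarith [h3.1]⟩ h2
    · exact div_nonneg (by linarith) (by linarith)
  · apply le_csSup (bdd_img h0 h12 h23 h34 _)
    refine ⟨t, mem_Iic.2 le_rfl, ?_⟩
    unfold trapMF
    rw [if_pos ⟨ht1, ht2⟩]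

lemma posIic_hi {t : ℝ} (ht : r2 ≤ t) : sSup (trapMF r1 r2 r3 r4 '' Iic t) = 1 := by
  apply le_antisymm
  · apply csSup_le (Set.Nonempty.image _ nonempty_Iic)
    rintro y ⟨x, hx, rfl⟩
    exact mu_le_one h0 h12 h23 h34 x
  · apply le_csSup (bdd_img h0 h12 h23 h34 _)
    refine ⟨r2, mem_Iic.2 ht, ?_⟩
    unfold trapMF
    rw [if_pos ⟨h12.le, le_rfl⟩, div_self (by linarith)]

lemma posIoi_lo {t : ℝ} (ht : t < r3) : sSup (trapMF r1 r2 r3 r4 '' Ioi t) = 1 := by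
  apply le_antisymm
  · apply csSup_le (Set.Nonempty.image _ nonempty_Ioi)
    rintro y ⟨x, hx, rfl⟩
    exact mu_le_one h0 h12 h23 h34 x
  · apply le_csSup (bdd_img h0 h12 h23 h34 _)
    refine ⟨r3, mem_Ioi.2 ht, ?_⟩
    unfold trapMF
    split_ifs with h1 h2
    · have : r3 = r2 := le_antisymm h1.2 h23
      rw [this, div_self (by linarith)]
    · rfl
    all_goals exact absurd ⟨h23, le_rfl⟩ h2

lemma posIoi_mid {t : ℝ} (ht3 : r3 ≤ t) (ht4 : t < r4) :
    sSup (trapMF r1 r2 r3 r4 '' Ioi t) = (r4 - t) / (r4 - r3) := by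
  have hne : (trapMF r1 r2 r3 r4 '' Ioi t).Nonempty := Set.Nonempty.image _ nonempty_Ioi
  apply le_antisymm
  · apply csSup_le hne
    rintro y ⟨x, hx, rfl⟩
    simp only [mem_Ioi] at hx
    unfold trapMF
    split_ifs with h1 h2 h3
    · exact absurd h1.2 (by linarith)
    · exact absurd h2.2 (by linarith)
    · gcongr
    · exact div_nonneg (by linarith) (by linarith)
  · rw [Real.le_sSup_iff (bdd_img h0 h12 h23 h34 _) hne]
    intro ε hε
    set δ : ℝ := min ((r4 - t) / 2) (-ε * (r4 - r3) / 2) with hδdef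
    have hδpos : 0 < δ := lt_min (by linarith) (by nlinarith)
    have hδ1 : δ ≤ (r4 - t) / 2 := min_le_left _ _
    have hδ2 : δ ≤ -ε * (r4 - r3) / 2 := min_le_right _ _
    refine ⟨trapMF r1 r2 r3 r4 (t + δ), ⟨t + δ, mem_Ioi.2 (by linarith), rfl⟩, ?_⟩
    have hval : trapMF r1 r2 r3 r4 (t + δ) = (r4 - (t + δ)) / (r4 - r3) := by
      unfold trapMF
      rw [if_neg (by push_neg; intro h; linarith),
        if_neg (by push_neg; intro h; linarith),
        if_pos ⟨by linarith, by linarith⟩]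
    rw [hval]
    rw [div_add' _ _ _ (by linarith : (r4 - r3) ≠ 0)]
    rw [div_lt_div_iff_of_pos_right (by linarith : (0:ℝ) < r4 - r3)]
    nlinarith

lemma posIoi_hi {t : ℝ} (ht : r4 ≤ t) : sSup (trapMF r1 r2 r3 r4 '' Ioi t) = 0 := by
  apply le_antisymm
  · apply Real.sSup_le _ le_rfl
    rintro y ⟨x, hx, rfl⟩
    simp only [mem_Ioi] at hx
    unfold trapMF
    split_ifs with h1 h2 h3 <;>
      [linarith [h1.2]; linarith [h2.2]; linarith [h3.2]; exact le_rfl]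
  · apply le_csSup (bdd_img h0 h12 h23 h34 _)
    refine ⟨t + 1, mem_Ioi.2 (by linarith), ?_⟩
    unfold trapMF
    rw [if_neg (by push_neg; intro h; linarith), if_neg (by push_neg; intro h; linarith),
      if_neg (by push_neg; intro h; linarith)]

-- mMeas piecewise values
lemma mIic_eq (t : ℝ) :
    mMeas (1/2) (trapMF r1 r2 r3 r4) (Iic t) =
      1/2 * sSup (trapMF r1 r2 r3 r4 '' Iic t) +
      1/2 * (1 - sSup (trapMF r1 r2 r3 r4 '' Ioi t)) := by
  simp only [mMeas, Pos, Nec, compl_Iic]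
  norm_num

lemma m_piece1 {t : ℝ} (ht : t < r1) :
    mMeas (1/2) (trapMF r1 r2 r3 r4) (Iic t) = 0 := by
  rw [mIic_eq h0 h12 h23 h34, posIic_lt h0 h12 h23 h34 ht,
    posIoi_lo h0 h12 h23 h34 (by linarith)]
  ring

lemma m_piece2 {t : ℝ} (ht1 : r1 ≤ t) (ht2 : t < r2) :
    mMeas (1/2) (trapMF r1 r2 r3 r4) (Iic t) = (t - r1) / (2 * (r2 - r1)) := by
  rw [mIic_eq h0 h12 h23 h34, posIic_mid h0 h12 h23 h34 ht1 ht2.le,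
    posIoi_lo h0 h12 h23 h34 (by linarith)]
  field_simp
  ring

lemma m_piece3 {t : ℝ} (ht1 : r2 ≤ t) (ht2 : t < r3) :
    mMeas (1/2) (trapMF r1 r2 r3 r4) (Iic t) = 1/2 := by
  rw [mIic_eq h0 h12 h23 h34, posIic_hi h0 h12 h23 h34 ht1,
    posIoi_lo h0 h12 h23 h34 ht2]
  ring

lemma m_piece4 {t : ℝ} (ht1 : r3 ≤ t) (ht2 : t < r4) :
    mMeas (1/2) (trapMF r1 r2 r3 r4) (Iic t) = 1 - (r4 - t) / (2 * (r4 - r3)) := by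
  rw [mIic_eq h0 h12 h23 h34, posIic_hi h0 h12 h23 h34 (by linarith),
    posIoi_mid h0 h12 h23 h34 ht1 ht2]
  have h : r4 - r3 ≠ 0 := by linarith
  field_simp
  ring

lemma m_piece5 {t : ℝ} (ht : r4 ≤ t) :
    mMeas (1/2) (trapMF r1 r2 r3 r4) (Iic t) = 1 := by
  rw [mIic_eq h0 h12 h23 h34, posIic_hi h0 h12 h23 h34 (by linarith),
    posIoi_hi h0 h12 h23 h34 ht]
  ring

end sup

set_option maxHeartbeats 1000000 in
theorem stmt_7 (r1 r2 r3 r4 : ℝ)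
    (h0 : 0 < r1) (h12 : r1 < r2) (h23 : r2 ≤ r3) (h34 : r3 < r4) :
    (∫ r in Set.Ioi (0:ℝ), mMeas (1/2) (trapMF r1 r2 r3 r4) (Set.Iic (1 / r))) =
      1 / (2 * (r2 - r1)) * Real.log (r2 / r1) +
        1 / (2 * (r4 - r3)) * Real.log (r4 / r3) := by
  have h02 : 0 < r2 := by linarith
  have h03 : 0 < r3 := by linarith
  have h04 : 0 < r4 := by linarith
  set a1 : ℝ := 1 / r1 with ha1
  set a2 : ℝ := 1 / r2 with ha2
  set a3 : ℝ := 1 / r3 with ha3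
  set a4 : ℝ := 1 / r4 with ha4
  have ha4p : 0 < a4 := by positivity
  have ha3p : 0 < a3 := by positivity
  have ha2p : 0 < a2 := by positivity
  have ha1p : 0 < a1 := by positivity
  have h43 : a4 < a3 := by rw [ha4, ha3]; exact one_div_lt_one_div_of_lt h03 h34
  have h32 : a3 ≤ a2 := by rw [ha3, ha2]; exact one_div_le_one_div_of_le h02 h23
  have h21 : a2 < a1 := by rw [ha2, ha1]; exact one_div_lt_one_div_of_lt h0 h12
  -- reciprocal helpers
  have key1 : ∀ {a b : ℝ}, 0 < a → 0 < b → a ≤ 1/b → b ≤ 1/a := by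
    intro a b ha hb h
    rw [le_div_iff₀ ha]
    nlinarith [(le_div_iff₀ hb).1 h]
  have key2 : ∀ {a b : ℝ}, 0 < a → 0 < b → 1/b < a → 1/a < b := by
    intro a b ha hb h
    rw [div_lt_iff₀ ha]
    nlinarith [(div_lt_iff₀ hb).1 h]
  have ehalf : ∀ x : ℝ, x ≠ 0 → x / (2 * x) = 1/2 := fun x hx => by
    rw [mul_comm, ← div_div, div_self hx]
  -- explicit piecewise integrand
  set g : ℝ → ℝ := fun r =>
    if r ≤ a4 then 1
    else if r ≤ a3 then 1 - (r4 - 1/r) / (2 * (r4 - r3))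
    else if r ≤ a2 then 1/2
    else if r ≤ a1 then (1/r - r1) / (2 * (r2 - r1))
    else 0 with hg
  have hgeq : EqOn (fun r => mMeas (1/2) (trapMF r1 r2 r3 r4) (Set.Iic (1 / r))) g (Ioi 0) := by
    intro r hr
    have hrpos : (0:ℝ) < r := hr
    simp only [hg]
    split_ifs with hA hB hC hD
    · exact m_piece5 h0 h12 h23 h34 (key1 hrpos h04 hA)
    · exact m_piece4 h0 h12 h23 h34 (key1 hrpos h03 hB) (key2 hrpos h04 (not_le.1 hA))
    · exact m_piece3 h0 h12 h23 h34 (key1 hrpos h02 hC) (key2 hrpos h03 (not_le.1 hB))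
    · exact m_piece2 h0 h12 h23 h34 (key1 hrpos h0 hD) (key2 hrpos h02 (not_le.1 hC))
    · exact m_piece1 h0 h12 h23 h34 (key2 hrpos h0 (not_le.1 hD))
  rw [setIntegral_congr_fun measurableSet_Ioi hgeq]
  -- measurability of g
  have hinv : Measurable fun r : ℝ => 1 / r := by
    simpa [one_div] using (measurable_inv : Measurable fun r : ℝ => r⁻¹)
  have hgm : Measurable g := by
    apply Measurable.ite (measurableSet_Iic) measurable_const
    apply Measurable.ite (measurableSet_Iic)
    · exact (measurable_const.sub ((measurable_const.sub hinv).div measurable_const))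
    apply Measurable.ite (measurableSet_Iic) measurable_const
    apply Measurable.ite (measurableSet_Iic)
    · exact ((hinv.sub measurable_const).div measurable_const)
    · exact measurable_const
  -- g vanishes beyond a1
  have hg0 : EqOn g (fun _ => (0:ℝ)) (Ioi a1) := by
    intro r hr
    have hr' : a1 < r := hr
    simp only [hg]
    rw [if_neg (by push_neg; linarith), if_neg (by push_neg; linarith),
      if_neg (by push_neg; linarith), if_neg (by push_neg; linarith)]
  -- integrability on Ioc 0 a1
  have hbdd : IntegrableOn g (Ioc 0 a1) := by
    apply Measure.integrableOn_of_bounded (M := 1)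
    · rw [Real.volume_Ioc]; exact ENNReal.ofReal_ne_top
    · exact hgm.aestronglyMeasurable
    · filter_upwards [ae_restrict_mem measurableSet_Ioc] with r hr
      have hrpos : 0 < r := hr.1
      simp only [hg]
      split_ifs with hA hB hC hD
      · simp
      · have h1 : r3 ≤ 1/r := key1 hrpos h03 hB
        have h2 : 1/r < r4 := key2 hrpos h04 (not_le.1 hA)
        rw [Real.norm_eq_abs, abs_le]
        constructor
        · have : (r4 - 1/r) / (2 * (r4 - r3)) ≤ 1 := by
            rw [div_le_one (by linarith)]; linarith
          linarith
        · have : (0:ℝ) ≤ (r4 - 1/r) / (2 * (r4 - r3)) :=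
            div_nonneg (by linarith) (by linarith)
          linarith
      · rw [Real.norm_eq_abs, abs_le]; norm_num
      · have h1 : r1 ≤ 1/r := key1 hrpos h0 hD
        have h2 : 1/r < r2 := key2 hrpos h02 (not_le.1 hC)
        rw [Real.norm_eq_abs, abs_le]
        constructor
        · have : (0:ℝ) ≤ (1/r - r1) / (2 * (r2 - r1)) :=
            div_nonneg (by linarith) (by linarith)
          linarith
        · rw [div_le_one (by linarith)]; linarith
      · simp
  -- split off the tail
  have hsplit : (∫ r in Ioi (0:ℝ), g r) = (∫ r in Ioc 0 a1, g r) + ∫ r in Ioi a1, g r := by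
    rw [← setIntegral_union (Set.Ioc_disjoint_Ioi le_rfl) measurableSet_Ioi hbdd]
    · rw [Set.Ioc_union_Ioi_eq_Ioi ha1p.le]
    · exact (integrableOn_zero).congr_fun (fun r hr => (hg0 hr).symm) measurableSet_Ioi
  rw [hsplit, setIntegral_congr_fun measurableSet_Ioi hg0, integral_zero, add_zero]
  rw [← intervalIntegral.integral_of_le ha1p.le]
  -- split into four interval integrals
  have hII : ∀ {a b : ℝ}, 0 ≤ a → a ≤ b → b ≤ a1 → IntervalIntegrable g volume a b := by
    intro a b h1 h2 h3
    rw [intervalIntegrable_iff_integrableOn_Ioc_of_le h2]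
    exact hbdd.mono_set (Ioc_subset_Ioc h1 h3)
  rw [← intervalIntegral.integral_add_adjacent_intervals
      (hII le_rfl ha4p.le (by linarith)) (hII ha4p.le (by linarith) (by linarith)),
    ← intervalIntegral.integral_add_adjacent_intervals (b := a3)
      (hII ha4p.le h43.le (by linarith)) (hII (by linarith) (by linarith) (by linarith)),
    ← intervalIntegral.integral_add_adjacent_intervals (b := a2)
      (hII (by linarith) h32 (by linarith)) (hII (by linarith) h21.le le_rfl)]
  -- piece 1
  have e1 : (∫ r in (0:ℝ)..a4, g r) = a4 := by
    rw [intervalIntegral.integral_congr (g := fun _ => (1:ℝ))]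
    · simp
    · intro r hr
      rw [uIcc_of_le ha4p.le] at hr
      simp only [hg]
      rw [if_pos hr.2]
  -- piece 2
  have e2 : (∫ r in a4..a3, g r)
      = (1 - r4 / (2 * (r4 - r3))) * (a3 - a4) + 1 / (2 * (r4 - r3)) * Real.log (r4 / r3) := by
    have hΔ : r4 - r3 ≠ 0 := by linarith
    rw [intervalIntegral.integral_congr
        (g := fun r => (1 - r4 / (2 * (r4 - r3))) + 1 / (2 * (r4 - r3)) * (1/r))]
    · have hcont : ContinuousOn (fun r : ℝ => 1 / (2 * (r4 - r3)) * (1/r)) (uIcc a4 a3) := by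
        apply continuousOn_const.mul
        apply ContinuousOn.div continuousOn_const continuousOn_id
        intro x hx
        rw [uIcc_of_le h43.le] at hx
        exact ne_of_gt (lt_of_lt_of_le ha4p hx.1)
      rw [intervalIntegral.integral_add intervalIntegrable_const (hcont.intervalIntegrable),
        intervalIntegral.integral_const, intervalIntegral.integral_const_mul,
        integral_one_div (by
          rw [uIcc_of_le h43.le]
          intro h
          exact absurd h.1 (not_le.2 ha4p))]
      have : a3 / a4 = r4 / r3 := by
        rw [ha3, ha4, div_div_div_eq, one_mul, mul_one]
      rw [this, smul_eq_mul]
      ring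
    · intro r hr
      rw [uIcc_of_le h43.le] at hr
      have hrpos : 0 < r := lt_of_lt_of_le ha4p hr.1
      simp only [hg]
      split_ifs with hA hB
      · have hra4 : r = a4 := le_antisymm hA hr.1
        rw [hra4, ha4, one_div_one_div]
        field_simp [hΔ]
        ring
      · field_simp [hΔ]
        ring
      all_goals exact absurd hr.2 hB
  -- piece 3
  have e3 : (∫ r in a3..a2, g r) = (a2 - a3) * (1/2) := by
    rw [intervalIntegral.integral_congr (g := fun _ => (1/2 : ℝ))]
    · rw [intervalIntegral.integral_const, smul_eq_mul]
    · intro r hr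
      rw [uIcc_of_le h32] at hr
      simp only [hg]
      split_ifs with hA hB hC
      · exact absurd hA (not_le.2 (lt_of_lt_of_le h43 hr.1))
      · have hra3 : r = a3 := le_antisymm hB hr.1
        rw [hra3, ha3, one_div_one_div, ehalf _ (by linarith : r4 - r3 ≠ 0)]
        norm_num
      · rfl
      all_goals exact absurd hr.2 hC
  -- piece 4
  have e4 : (∫ r in a2..a1, g r)
      = (-r1 / (2 * (r2 - r1))) * (a1 - a2) + 1 / (2 * (r2 - r1)) * Real.log (r2 / r1) := by
    have hΔ : r2 - r1 ≠ 0 := by linarith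
    rw [intervalIntegral.integral_congr
        (g := fun r => (-r1 / (2 * (r2 - r1))) + 1 / (2 * (r2 - r1)) * (1/r))]
    · have hcont : ContinuousOn (fun r : ℝ => 1 / (2 * (r2 - r1)) * (1/r)) (uIcc a2 a1) := by
        apply continuousOn_const.mul
        apply ContinuousOn.div continuousOn_const continuousOn_id
        intro x hx
        rw [uIcc_of_le h21.le] at hx
        exact ne_of_gt (lt_of_lt_of_le ha2p hx.1)
      rw [intervalIntegral.integral_add intervalIntegrable_const (hcont.intervalIntegrable),
        intervalIntegral.integral_const, intervalIntegral.integral_const_mul,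
        integral_one_div (by
          rw [uIcc_of_le h21.le]
          intro h
          exact absurd h.1 (not_le.2 ha2p))]
      have : a1 / a2 = r2 / r1 := by
        rw [ha1, ha2, div_div_div_eq, one_mul, mul_one]
      rw [this, smul_eq_mul]
      ring
    · intro r hr
      rw [uIcc_of_le h21.le] at hr
      have hrpos : 0 < r := lt_of_lt_of_le ha2p hr.1
      simp only [hg]
      split_ifs with hA hB hC hD
      · exact absurd hA (not_le.2 (lt_of_lt_of_le h43 (le_trans h32 hr.1)))
      · -- r = a3 = a2, so r2 = r3
        have hra : r = a3 := le_antisymm hB (le_trans h32 hr.1)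
        have hra2 : r = a2 := le_antisymm (hra ▸ h32) hr.1
        have hr23 : r2 = r3 := by
          have : a2 = a3 := by rw [← hra2, hra]
          rw [ha2, ha3] at this
          field_simp at this
          linarith
        have h42 : r4 - r2 ≠ 0 := by rw [hr23]; linarith
        rw [hra2, ha2, one_div_one_div, ← hr23]
        rw [show -r1 / (2*(r2-r1)) + 1/(2*(r2-r1)) * r2 = (r2-r1)/(2*(r2-r1)) from by ring,
          ehalf _ hΔ, ehalf _ h42]
        norm_num
      · have hra2 : r = a2 := le_antisymm hC hr.1
        rw [hra2, ha2, one_div_one_div]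
        rw [show -r1 / (2*(r2-r1)) + 1/(2*(r2-r1)) * r2 = (r2-r1)/(2*(r2-r1)) from by ring,
          ehalf _ hΔ]
      · field_simp [hΔ]
        ring
      · exact absurd hr.2 hD
  rw [e1, e2, e3, e4]
  -- final arithmetic
  rw [ha1, ha2, ha3, ha4]
  have hΔ4 : r4 - r3 ≠ 0 := by linarith
  have hΔ1 : r2 - r1 ≠ 0 := by linarith
  have hr1 : r1 ≠ 0 := ne_of_gt h0
  have hr2 : r2 ≠ 0 := ne_of_gt h02
  have hr3 : r3 ≠ 0 := ne_of_gt h03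
  have hr4 : r4 ≠ 0 := ne_of_gt h04
  field_simp [hΔ4, hΔ1]
  ring
end

section
/- Let n ≥ 1, λ ∈ [0,1], and for each i = 1, …, n let d_i ≥ 0, c_i ∈ ℝ, h_i > 0, and let D_i be the trapezoidal fuzzy variable (a_i − α_i, a_i, b_i, b_i + β_i) with α_i > 0, β_i > 0, 0 < a_i − α_i, and a_i ≤ b_i. Set e_i = ∫_0^∞ m_λ(D_i ≤ 1/r) dr and f(x) = Σ_{i=1}^n (d_i·x_i − c_i − (h_i·x_i²/2)·e_i). Then f(y) ≤ f(x*) for every y ∈ ℝⁿ with y_i ≥ 0, where x_i* = d_i / ( h_i·[ (λ/α_i)·ln(a_i/(a_i − α_i)) + ((1 − λ)/β_i)·ln((b_i + β_i)/b_i) ] ). -/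
open MeasureTheory Set

section helper
variable {a b α β : ℝ}

lemma trap_nonneg (hα : 0 < α) (hβ : 0 < β) (x : ℝ) : 0 ≤ trapMF2 a b α β x := by
  unfold trapMF2
  split_ifs with h1 h2 h3
  · have : (a - x) / α ≤ 1 := by
      rw [div_le_one hα]; linarith [h1.1]
    linarith
  · norm_num
  · have : (x - b) / β ≤ 1 := by
      rw [div_le_one hβ]; linarith [h3.2]
    linarith
  · exact le_refl _

lemma trap_le_one (hα : 0 < α) (hβ : 0 < β) (x : ℝ) : trapMF2 a b α β x ≤ 1 := by
  unfold trapMF2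
  split_ifs with h1 h2 h3
  · have : 0 ≤ (a - x) / α := div_nonneg (by linarith [h1.2]) hα.le
    linarith
  · exact le_refl _
  · have : 0 ≤ (x - b) / β := div_nonneg (by linarith [h3.1]) hβ.le
    linarith
  · norm_num

lemma trap_left (hα : 0 < α) (hab : a ≤ b) {x : ℝ} (h1 : a - α ≤ x) (h2 : x ≤ a) :
    trapMF2 a b α β x = 1 - (a - x) / α := by
  unfold trapMF2; rw [if_pos ⟨h1, h2⟩]

lemma trap_mid (hα : 0 < α) {x : ℝ} (h1 : a ≤ x) (h2 : x ≤ b) :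
    trapMF2 a b α β x = 1 := by
  unfold trapMF2
  rcases eq_or_lt_of_le h1 with h | h
  · rw [if_pos ⟨by linarith, h.symm.le⟩, ← h]; simp
  · rw [if_neg (by push_neg; intro _; linarith), if_pos ⟨h1, h2⟩]

lemma trap_right (hα : 0 < α) (hab : a ≤ b) {x : ℝ} (h1 : b < x) (h2 : x ≤ b + β) :
    trapMF2 a b α β x = 1 - (x - b) / β := by
  unfold trapMF2
  rw [if_neg (by push_neg; intro _; linarith), if_neg (by push_neg; intro _; linarith),
    if_pos ⟨h1.le, h2⟩]

lemma trap_zero_left (hα : 0 < α) (hab : a ≤ b) {x : ℝ} (h1 : x < a - α) :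
    trapMF2 a b α β x = 0 := by
  have hβ' : x < b + β ∨ True := Or.inr trivial
  unfold trapMF2
  rw [if_neg (by push_neg; intro h; linarith), if_neg (by push_neg; intro h; linarith),
    if_neg (by push_neg; intro h; linarith)]

lemma trap_zero_right (hβ : 0 < β) (hab : a ≤ b) {x : ℝ} (h1 : b + β < x) :
    trapMF2 a b α β x = 0 := by
  unfold trapMF2
  rw [if_neg (by push_neg; intro h; linarith), if_neg (by push_neg; intro h; linarith),
    if_neg (by push_neg; intro h; linarith)]

end helper
section sups
variable {a b α β : ℝ} (hα : 0 < α) (hβ : 0 < β) (hpos : 0 < a - α) (hab : a ≤ b)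

lemma trap_bdd (hα : 0 < α) (hβ : 0 < β) (s : Set ℝ) :
    BddAbove (trapMF2 a b α β '' s) :=
  ⟨1, by rintro y ⟨x, -, rfl⟩; exact trap_le_one hα hβ x⟩

include hα hβ hab in
lemma pos_eq_one {t : ℝ} (ht : a ≤ t) : Pos (trapMF2 a b α β) (Iic t) = 1 := by
  apply IsGreatest.csSup_eq
  constructor
  · exact ⟨a, by simpa using ht, trap_mid hα le_rfl hab⟩
  · rintro y ⟨x, -, rfl⟩; exact trap_le_one hα hβ x

include hα hβ hab in
lemma pos_eq_ramp {t : ℝ} (h1 : a - α ≤ t) (h2 : t ≤ a) :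
    Pos (trapMF2 a b α β) (Iic t) = 1 - (a - t) / α := by
  apply IsGreatest.csSup_eq
  constructor
  · exact ⟨t, by simp, trap_left hα hab h1 h2⟩
  · rintro y ⟨x, hx, rfl⟩
    simp only [mem_Iic] at hx
    rcases lt_or_ge x (a - α) with h | h
    · rw [trap_zero_left hα hab h]
      have : (a - t) / α ≤ 1 := by rw [div_le_one hα]; linarith
      linarith
    · rw [trap_left hα hab h (le_trans hx h2)]
      have : (a - t)/α ≤ (a - x)/α := by gcongr <;> linarith
      linarith

include hα hβ hab in
lemma pos_eq_zero {t : ℝ} (ht : t < a - α) : Pos (trapMF2 a b α β) (Iic t) = 0 := by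
  apply IsGreatest.csSup_eq
  constructor
  · exact ⟨t, by simp, trap_zero_left hα hab ht⟩
  · rintro y ⟨x, hx, rfl⟩
    simp only [mem_Iic] at hx
    rw [trap_zero_left hα hab (lt_of_le_of_lt hx ht)]

include hα hβ hab in
lemma sup_ioi_one {t : ℝ} (ht : t < b) : sSup (trapMF2 a b α β '' Ioi t) = 1 := by
  apply IsGreatest.csSup_eq
  constructor
  · refine ⟨max a ((t + b) / 2), ?_, ?_⟩
    · simp only [mem_Ioi, lt_max_iff]
      rcases lt_or_ge t a with h | h
      · exact Or.inl h
      · exact Or.inr (by linarith)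
    · exact trap_mid hα (le_max_left _ _) (max_le hab (by linarith))
  · rintro y ⟨x, -, rfl⟩; exact trap_le_one hα hβ x

include hα hβ hab in
lemma sup_ioi_zero {t : ℝ} (ht : b + β ≤ t) : sSup (trapMF2 a b α β '' Ioi t) = 0 := by
  apply IsGreatest.csSup_eq
  constructor
  · exact ⟨t + 1, by simp, trap_zero_right hβ hab (by linarith)⟩
  · rintro y ⟨x, hx, rfl⟩
    simp only [mem_Ioi] at hx
    rw [trap_zero_right hβ hab (by linarith)]

include hα hβ hab in
lemma sup_ioi_ramp {t : ℝ} (h1 : b ≤ t) (h2 : t < b + β) :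
    sSup (trapMF2 a b α β '' Ioi t) = 1 - (t - b) / β := by
  have hne : (trapMF2 a b α β '' Ioi t).Nonempty := ⟨_, ⟨t + 1, by simp, rfl⟩⟩
  have hub : ∀ y ∈ trapMF2 a b α β '' Ioi t, y ≤ 1 - (t - b) / β := by
    rintro y ⟨x, hx, rfl⟩
    simp only [mem_Ioi] at hx
    rcases le_or_gt x (b + β) with h | h
    · rw [trap_right hα hab (lt_of_le_of_lt h1 hx) h]
      have : (t - b)/β ≤ (x - b)/β := by gcongr <;> linarith
      linarith
    · rw [trap_zero_right hβ hab h]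
      have : (t - b) / β ≤ 1 := by rw [div_le_one hβ]; linarith
      linarith
  apply le_antisymm (csSup_le hne hub)
  rw [le_csSup_iff (trap_bdd hα hβ _) hne]
  intro w hw
  by_contra hcon
  push_neg at hcon
  set u := min (b + β * (1 - w)) (b + β) with hu
  have hut : t < u := by
    have h3 : (t - b)/β < 1 - w := by linarith
    have h4 := (div_lt_iff₀ hβ).mp h3
    exact lt_min (by linarith) (by linarith)
  set x := (t + u) / 2 with hx
  have hxu : x < u := by rw [hx]; linarith
  have htx : t < x := by rw [hx]; linarith
  have hxb : b < x := lt_of_le_of_lt h1 htx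
  have hxbb : x ≤ b + β := le_of_lt (lt_of_lt_of_le hxu (min_le_right _ _))
  have := hw ⟨x, htx, rfl⟩
  rw [trap_right hα hab hxb hxbb] at this
  have hxw : x < b + β * (1 - w) := lt_of_lt_of_le hxu (min_le_left _ _)
  have : (x - b) / β < 1 - w := by rw [div_lt_iff₀ hβ]; nlinarith
  linarith

end sups

/-- Explicit piecewise form of `r ↦ m_λ(D ≤ 1/r)` for the trapezoidal variable. -/
noncomputable def Gfun (a b α β l : ℝ) : ℝ → ℝ := fun r =>
  if r ≤ 1/(b+β) then 1
  else if r ≤ 1/b then l + (1-l) * (1/r - b)/β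
  else if r ≤ 1/a then l
  else if r ≤ 1/(a-α) then l * (1/r - (a-α))/α
  else 0

section pointwise
variable {a b α β l : ℝ}

lemma mMeas_eq_G (hα : 0 < α) (hβ : 0 < β) (hpos : 0 < a - α) (hab : a ≤ b)
    {r : ℝ} (hr : 0 < r) :
    mMeas l (trapMF2 a b α β) (Iic (1/r)) = Gfun a b α β l r := by
  have ha : 0 < a := by linarith
  have hb : 0 < b := by linarith
  have hbb : 0 < b + β := by linarith
  have ht : 0 < 1/r := by positivity
  set t := 1/r with htdef
  have key : ∀ c : ℝ, 0 < c → (r ≤ 1/c ↔ c ≤ t) := by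
    intro c hc
    rw [le_div_iff₀ hc, htdef, le_div_iff₀ hr, mul_comm]
  have hnec : Nec (trapMF2 a b α β) (Iic t) = 1 - sSup (trapMF2 a b α β '' Ioi t) := by
    unfold Nec Pos; rw [compl_Iic]
  unfold Gfun mMeas
  rw [hnec]
  split_ifs with h1 h2 h3 h4
  · have hbt : b + β ≤ t := (key _ hbb).mp h1
    rw [pos_eq_one hα hβ hab (by linarith), sup_ioi_zero hα hβ hab hbt]
    ring
  · have htb : b ≤ t := (key _ hb).mp h2
    have htbb : t < b + β := by
      rcases lt_or_ge t (b+β) with h | h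
      · exact h
      · exact absurd ((key _ hbb).mpr h) h1
    rw [pos_eq_one hα hβ hab (by linarith), sup_ioi_ramp hα hβ hab htb htbb]
    ring
  · have hta : a ≤ t := (key _ ha).mp h3
    have htb : t < b := by
      rcases lt_or_ge t b with h | h
      · exact h
      · exact absurd ((key _ hb).mpr h) h2
    rw [pos_eq_one hα hβ hab hta, sup_ioi_one hα hβ hab htb]
    ring
  · have hta : a - α ≤ t := (key _ hpos).mp h4
    have hta' : t < a := by
      rcases lt_or_ge t a with h | h
      · exact h
      · exact absurd ((key _ ha).mpr h) h3
    rw [pos_eq_ramp hα hβ hab hta hta'.le, sup_ioi_one hα hβ hab (by linarith)]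
    have hr' : r ≠ 0 := ne_of_gt hr
    field_simp
    linear_combination l * mul_inv_cancel₀ hr'
  · have hta : t < a - α := by
      rcases lt_or_ge t (a - α) with h | h
      · exact h
      · exact absurd ((key _ hpos).mpr h) h4
    rw [pos_eq_zero hα hβ hab hta, sup_ioi_one hα hβ hab (by linarith)]
    ring

end pointwise

section integral
variable {a b α β l : ℝ}

lemma one_div_intervalIntegrable {u v : ℝ} (hu : 0 < u) (huv : u ≤ v) :
    IntervalIntegrable (fun r : ℝ => 1/r) volume u v := by
  apply intervalIntegral.intervalIntegrable_one_div (f := fun x : ℝ => x)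
  · intro x hx
    rw [uIcc_of_le huv] at hx
    exact ne_of_gt (lt_of_lt_of_le hu hx.1)
  · exact continuousOn_id

lemma affine_inv_intervalIntegrable (C D : ℝ) {u v : ℝ} (hu : 0 < u) (huv : u ≤ v) :
    IntervalIntegrable (fun r : ℝ => C + D * (1/r)) volume u v :=
  (intervalIntegrable_const).add ((one_div_intervalIntegrable hu huv).const_mul D)

lemma affine_inv_integral (C D : ℝ) {u v : ℝ} (hu : 0 < u) (huv : u ≤ v) :
    ∫ r in u..v, (C + D * (1/r)) = C * (v - u) + D * Real.log (v / u) := by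
  rw [intervalIntegral.integral_add intervalIntegrable_const
    ((one_div_intervalIntegrable hu huv).const_mul D),
    intervalIntegral.integral_const_mul, intervalIntegral.integral_const,
    integral_one_div (by rw [uIcc_of_le huv]; intro h; exact absurd h.1 (by linarith))]
  rw [smul_eq_mul]
  ring

lemma trap_integral (hα : 0 < α) (hβ : 0 < β) (hpos : 0 < a - α) (hab : a ≤ b)
    (hl0 : 0 ≤ l) (hl1 : l ≤ 1) :
    (∫ r in Ioi (0:ℝ), mMeas l (trapMF2 a b α β) (Iic (1/r)))
      = l/α * Real.log (a/(a-α)) + (1-l)/β * Real.log ((b+β)/b) := by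
  have ha : 0 < a := by linarith
  have hb : 0 < b := by linarith
  have hbb : 0 < b + β := by linarith
  set p1 := 1/(b+β) with hp1
  set p2 := 1/b with hp2
  set p3 := 1/a with hp3
  set p4 := 1/(a-α) with hp4
  have hp1pos : 0 < p1 := by positivity
  have hp2pos : 0 < p2 := by positivity
  have hp3pos : 0 < p3 := by positivity
  have hp4pos : 0 < p4 := by positivity
  have h12 : p1 ≤ p2 := by rw [hp1, hp2]; gcongr <;> linarith
  have h23 : p2 ≤ p3 := by rw [hp2, hp3]; gcongr <;> linarith
  have h34 : p3 ≤ p4 := by rw [hp3, hp4]; gcongr <;> linarith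
  -- replace integrand by Gfun
  rw [setIntegral_congr_fun measurableSet_Ioi
    (fun r (hr : r ∈ Ioi (0:ℝ)) => mMeas_eq_G hα hβ hpos hab hr)]
  -- EqOn facts for Gfun on the pieces
  have e1 : EqOn (Gfun a b α β l) (fun _ => (1:ℝ)) (Ioc 0 p1) := by
    intro r hr; simp only [Gfun]; rw [if_pos hr.2]
  have e2 : EqOn (Gfun a b α β l) (fun r => (l - (1-l)*b/β) + ((1-l)/β) * (1/r)) (Ioc p1 p2) := by
    intro r hr
    simp only [Gfun]
    rw [if_neg (not_le.mpr hr.1), if_pos hr.2]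
    ring
  have e3 : EqOn (Gfun a b α β l) (fun _ => l) (Ioc p2 p3) := by
    intro r hr
    simp only [Gfun]
    rw [if_neg (not_le.mpr (lt_of_le_of_lt h12 hr.1)), if_neg (not_le.mpr hr.1), if_pos hr.2]
  have e4 : EqOn (Gfun a b α β l) (fun r => (-(l*(a-α)/α)) + (l/α) * (1/r)) (Ioc p3 p4) := by
    intro r hr
    simp only [Gfun]
    rw [if_neg (not_le.mpr (lt_of_le_of_lt (h12.trans h23) hr.1)),
      if_neg (not_le.mpr (lt_of_le_of_lt h23 hr.1)), if_neg (not_le.mpr hr.1), if_pos hr.2]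
    ring
  have e5 : EqOn (Gfun a b α β l) (fun _ => (0:ℝ)) (Ioi p4) := by
    intro r hr
    simp only [Gfun]
    rw [if_neg (not_le.mpr (lt_of_le_of_lt (h12.trans (h23.trans h34)) hr)),
      if_neg (not_le.mpr (lt_of_le_of_lt (h23.trans h34) hr)),
      if_neg (not_le.mpr (lt_of_le_of_lt h34 hr)), if_neg (not_le.mpr hr)]
  -- integrability on pieces
  have i1 : IntegrableOn (Gfun a b α β l) (Ioc 0 p1) := by
    rw [IntegrableOn, integrable_congr (ae_restrict_of_forall_mem measurableSet_Ioc e1)]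
    exact (integrableOn_const measure_Ioc_lt_top.ne)
  have i2 : IntegrableOn (Gfun a b α β l) (Ioc p1 p2) := by
    rw [IntegrableOn, integrable_congr (ae_restrict_of_forall_mem measurableSet_Ioc e2)]
    exact (affine_inv_intervalIntegrable _ _ hp1pos h12).1
  have i3 : IntegrableOn (Gfun a b α β l) (Ioc p2 p3) := by
    rw [IntegrableOn, integrable_congr (ae_restrict_of_forall_mem measurableSet_Ioc e3)]
    exact (integrableOn_const measure_Ioc_lt_top.ne)
  have i4 : IntegrableOn (Gfun a b α β l) (Ioc p3 p4) := by
    rw [IntegrableOn, integrable_congr (ae_restrict_of_forall_mem measurableSet_Ioc e4)]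
    exact (affine_inv_intervalIntegrable _ _ hp3pos h34).1
  have i5 : IntegrableOn (Gfun a b α β l) (Ioi p4) := by
    rw [IntegrableOn, integrable_congr (ae_restrict_of_forall_mem measurableSet_Ioi e5)]
    exact integrable_zero _ _ _
  -- split the integral
  have sp1 : (∫ r in Ioi (0:ℝ), Gfun a b α β l r)
      = (∫ r in Ioc (0:ℝ) p4, Gfun a b α β l r) + ∫ r in Ioi p4, Gfun a b α β l r := by
    rw [← setIntegral_union (Ioc_disjoint_Ioi le_rfl) measurableSet_Ioi
      (((i1.union i2).union i3).union i4 |>.congr_set_ae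
        (by rw [Ioc_union_Ioc_eq_Ioc (by positivity : (0:ℝ) ≤ p1) h12,
          Ioc_union_Ioc_eq_Ioc (by positivity : (0:ℝ) ≤ p2) h23,
          Ioc_union_Ioc_eq_Ioc (by positivity : (0:ℝ) ≤ p3) h34]; exact Filter.EventuallyEq.rfl)) i5,
      Ioc_union_Ioi_eq_Ioi hp4pos.le]
  have sp2 : (∫ r in Ioc (0:ℝ) p4, Gfun a b α β l r)
      = (∫ r in Ioc (0:ℝ) p3, Gfun a b α β l r) + ∫ r in Ioc p3 p4, Gfun a b α β l r := by
    rw [← setIntegral_union (Ioc_disjoint_Ioc_of_le le_rfl) measurableSet_Ioc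
      ((i1.union i2).union i3 |>.congr_set_ae
        (by rw [Ioc_union_Ioc_eq_Ioc (by positivity : (0:ℝ) ≤ p1) h12,
          Ioc_union_Ioc_eq_Ioc (by positivity : (0:ℝ) ≤ p2) h23]; exact Filter.EventuallyEq.rfl)) i4,
      Ioc_union_Ioc_eq_Ioc (by positivity : (0:ℝ) ≤ p3) h34]
  have sp3 : (∫ r in Ioc (0:ℝ) p3, Gfun a b α β l r)
      = (∫ r in Ioc (0:ℝ) p2, Gfun a b α β l r) + ∫ r in Ioc p2 p3, Gfun a b α β l r := by
    rw [← setIntegral_union (Ioc_disjoint_Ioc_of_le le_rfl) measurableSet_Ioc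
      (i1.union i2 |>.congr_set_ae
        (by rw [Ioc_union_Ioc_eq_Ioc (by positivity : (0:ℝ) ≤ p1) h12]; exact Filter.EventuallyEq.rfl)) i3,
      Ioc_union_Ioc_eq_Ioc (by positivity : (0:ℝ) ≤ p2) h23]
  have sp4 : (∫ r in Ioc (0:ℝ) p2, Gfun a b α β l r)
      = (∫ r in Ioc (0:ℝ) p1, Gfun a b α β l r) + ∫ r in Ioc p1 p2, Gfun a b α β l r := by
    rw [← setIntegral_union (Ioc_disjoint_Ioc_of_le le_rfl) measurableSet_Ioc i1 i2,
      Ioc_union_Ioc_eq_Ioc (by positivity : (0:ℝ) ≤ p1) h12]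
  -- values of the piece integrals
  have v1 : (∫ r in Ioc (0:ℝ) p1, Gfun a b α β l r) = p1 := by
    rw [setIntegral_congr_fun measurableSet_Ioc e1]
    simp [Real.volume_Ioc, hp1pos.le]
  have v2 : (∫ r in Ioc p1 p2, Gfun a b α β l r)
      = (l - (1-l)*b/β) * (p2 - p1) + ((1-l)/β) * Real.log ((b+β)/b) := by
    rw [setIntegral_congr_fun measurableSet_Ioc e2,
      ← intervalIntegral.integral_of_le h12, affine_inv_integral _ _ hp1pos h12]
    congr 2
    rw [hp1, hp2]
    rw [div_div_div_eq]
    field_simp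
  have v3 : (∫ r in Ioc p2 p3, Gfun a b α β l r) = l * (p3 - p2) := by
    rw [setIntegral_congr_fun measurableSet_Ioc e3]
    simp [Real.volume_Ioc, h23]
    ring
  have v4 : (∫ r in Ioc p3 p4, Gfun a b α β l r)
      = (-(l*(a-α)/α)) * (p4 - p3) + (l/α) * Real.log (a/(a-α)) := by
    rw [setIntegral_congr_fun measurableSet_Ioc e4,
      ← intervalIntegral.integral_of_le h34, affine_inv_integral _ _ hp3pos h34]
    congr 2
    rw [hp3, hp4]
    rw [div_div_div_eq]
    field_simp
  have v5 : (∫ r in Ioi p4, Gfun a b α β l r) = 0 := by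
    rw [setIntegral_congr_fun measurableSet_Ioi e5]
    simp
  rw [sp1, sp2, sp3, sp4, v1, v2, v3, v4, v5]
  rw [hp1, hp2, hp3, hp4]
  have h1 : b + β ≠ 0 := ne_of_gt hbb
  have h2 : b ≠ 0 := ne_of_gt hb
  have h3 : a ≠ 0 := ne_of_gt ha
  have h4 : a - α ≠ 0 := ne_of_gt hpos
  have h5 : α ≠ 0 := ne_of_gt hα
  have h6 : β ≠ 0 := ne_of_gt hβ
  field_simp
  ring

end integral

theorem stmt_11 (n : ℕ) (hn : 1 ≤ n) (l : ℝ) (hl : l ∈ Set.Icc (0:ℝ) 1)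
    (d c hh a b α β e xs : Fin n → ℝ)
    (hd : ∀ i, 0 ≤ d i) (hhpos : ∀ i, 0 < hh i)
    (hα : ∀ i, 0 < α i) (hβ : ∀ i, 0 < β i)
    (hpos : ∀ i, 0 < a i - α i) (hab : ∀ i, a i ≤ b i)
    (he : ∀ i, e i =
      ∫ r in Set.Ioi (0:ℝ), mMeas l (trapMF2 (a i) (b i) (α i) (β i)) (Set.Iic (1 / r)))
    (hxs : ∀ i, xs i = d i / (hh i *
      (l / α i * Real.log (a i / (a i - α i)) +
        (1 - l) / β i * Real.log ((b i + β i) / b i)))) :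
    ∀ y : Fin n → ℝ, (∀ i, 0 ≤ y i) →
      (∑ i, (d i * y i - c i - hh i * y i ^ 2 / 2 * e i)) ≤
      (∑ i, (d i * xs i - c i - hh i * xs i ^ 2 / 2 * e i)) := by
  intro y hy
  apply Finset.sum_le_sum
  intro i _
  obtain ⟨k, hk⟩ : ∃ k, k = l / α i * Real.log (a i / (a i - α i)) +
      (1 - l) / β i * Real.log ((b i + β i) / b i) := ⟨_, rfl⟩
  have hei : e i = k := by
    rw [he i, trap_integral (hα i) (hβ i) (hpos i) (hab i) hl.1 hl.2, hk]
  have hL1 : 0 < Real.log (a i / (a i - α i)) :=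
    Real.log_pos ((one_lt_div (hpos i)).mpr (by linarith [hα i]))
  have hL2 : 0 < Real.log ((b i + β i) / b i) := by
    have hb : 0 < b i := by linarith [hpos i, hab i, hα i]
    exact Real.log_pos ((one_lt_div hb).mpr (by linarith [hβ i]))
  have hkpos : 0 < k := by
    rcases lt_or_eq_of_le hl.2 with h | h
    · have t1 : 0 ≤ l / α i * Real.log (a i / (a i - α i)) :=
        mul_nonneg (div_nonneg hl.1 (hα i).le) hL1.le
      have t2 : 0 < (1 - l) / β i * Real.log ((b i + β i) / b i) :=
        mul_pos (div_pos (by linarith) (hβ i)) hL2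
      rw [hk]; linarith
    · have t1 : 0 < l / α i * Real.log (a i / (a i - α i)) :=
        mul_pos (div_pos (by linarith) (hα i)) hL1
      have t2 : 0 ≤ (1 - l) / β i * Real.log ((b i + β i) / b i) :=
        mul_nonneg (div_nonneg (by linarith) (hβ i).le) hL2.le
      rw [hk]; linarith
  have hhk : 0 < hh i * k := mul_pos (hhpos i) hkpos
  have hdx : d i = hh i * k * xs i := by
    rw [hxs i, ← hk]
    field_simp
    rw [mul_div_assoc, div_self (hhpos i).ne', mul_one]
  rw [hei, hdx]
  have expand : hh i * k * xs i * y i - c i - hh i * y i ^ 2 / 2 * k -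
      (hh i * k * xs i * xs i - c i - hh i * xs i ^ 2 / 2 * k)
      = -((hh i * k) * (y i - xs i)^2) / 2 := by ring
  have hsq : 0 ≤ hh i * k * (y i - xs i)^2 := mul_nonneg hhk.le (sq_nonneg _)
  linarith
end

section
/- Let D be the trapezoidal fuzzy variable (r1,r2,r3,r4) with 0 < r1 < r2 ≤ r3 < r4, and let λ1, λ2 ∈ [0,1] with λ1 ≤ λ2. Then E_{λ1}(1/D) ≤ E_{λ2}(1/D), i.e., (λ1/(r2 − r1))·ln(r2/r1) + ((1 − λ1)/(r4 − r3))·ln(r4/r3) ≤ (λ2/(r2 − r1))·ln(r2/r1) + ((1 − λ2)/(r4 − r3))·ln(r4/r3); equivalently, (1/(r2 − r1))·ln(r2/r1) ≥ (1/(r4 − r3))·ln(r4/r3). -/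
open MeasureTheory Set

lemma Pos_nonneg {μ : ℝ → ℝ} (hμ : ∀ x, μ x ∈ Set.Icc (0:ℝ) 1) (A : Set ℝ) :
    0 ≤ Pos μ A :=
  Real.sSup_nonneg (by rintro _ ⟨x, _, rfl⟩; exact (hμ x).1)

lemma Pos_le_one {μ : ℝ → ℝ} (hμ : ∀ x, μ x ∈ Set.Icc (0:ℝ) 1) (A : Set ℝ) :
    Pos μ A ≤ 1 :=
  Real.sSup_le (by rintro _ ⟨x, _, rfl⟩; exact (hμ x).2) zero_le_one

lemma Pos_mono {μ : ℝ → ℝ} (hμ : ∀ x, μ x ∈ Set.Icc (0:ℝ) 1) {A B : Set ℝ}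
    (hAB : A ⊆ B) : Pos μ A ≤ Pos μ B := by
  rcases A.eq_empty_or_nonempty with rfl | hA
  · simpa [Pos] using Pos_nonneg hμ B
  · exact csSup_le_csSup ⟨1, by rintro _ ⟨x, _, rfl⟩; exact (hμ x).2⟩
      (hA.image μ) (fun _ ⟨x, hx, h⟩ => ⟨x, hAB hx, h⟩)

lemma one_le_Pos {μ : ℝ → ℝ} (hμ : ∀ x, μ x ∈ Set.Icc (0:ℝ) 1) {A : Set ℝ} {x0 : ℝ}
    (h1 : μ x0 = 1) (hx0 : x0 ∈ A) : 1 ≤ Pos μ A := by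
  have : μ x0 ≤ Pos μ A :=
    le_csSup ⟨1, by rintro _ ⟨x, _, rfl⟩; exact (hμ x).2⟩ ⟨x0, hx0, rfl⟩
  rwa [h1] at this

lemma Nec_le_Pos {μ : ℝ → ℝ} (hμ : ∀ x, μ x ∈ Set.Icc (0:ℝ) 1) {A : Set ℝ} {x0 : ℝ}
    (h1 : μ x0 = 1) : Nec μ A ≤ Pos μ A := by
  unfold Nec
  by_cases hx : x0 ∈ A
  · have h2 := one_le_Pos hμ h1 hx
    have h3 := Pos_nonneg hμ Aᶜ
    linarith
  · have h2 := one_le_Pos hμ h1 (by simpa using hx : x0 ∈ Aᶜ)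
    have h3 := Pos_nonneg hμ A
    linarith

lemma mMeas_mono_l {μ : ℝ → ℝ} (hμ : ∀ x, μ x ∈ Set.Icc (0:ℝ) 1) {A : Set ℝ}
    {l1 l2 : ℝ} (hle : l1 ≤ l2) {x0 : ℝ} (h1 : μ x0 = 1) :
    mMeas l1 μ A ≤ mMeas l2 μ A := by
  have h := Nec_le_Pos hμ h1 (A := A)
  unfold mMeas; nlinarith

lemma mMeas_mono_set {μ : ℝ → ℝ} (hμ : ∀ x, μ x ∈ Set.Icc (0:ℝ) 1) {A B : Set ℝ}
    (hAB : A ⊆ B) {l : ℝ} (hl : l ∈ Set.Icc (0:ℝ) 1) :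
    mMeas l μ A ≤ mMeas l μ B := by
  have h1 := Pos_mono hμ hAB
  have h2 := Pos_mono hμ (Set.compl_subset_compl.2 hAB)
  unfold mMeas Nec
  nlinarith [hl.1, hl.2]

lemma mMeas_nonneg {μ : ℝ → ℝ} (hμ : ∀ x, μ x ∈ Set.Icc (0:ℝ) 1) {A : Set ℝ} {l : ℝ}
    (hl : l ∈ Set.Icc (0:ℝ) 1) : 0 ≤ mMeas l μ A := by
  have h1 := Pos_nonneg hμ A
  have h2 := Pos_le_one hμ Aᶜ
  unfold mMeas Nec; nlinarith [hl.1, hl.2]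

lemma mMeas_le_one {μ : ℝ → ℝ} (hμ : ∀ x, μ x ∈ Set.Icc (0:ℝ) 1) {A : Set ℝ} {l : ℝ}
    (hl : l ∈ Set.Icc (0:ℝ) 1) : mMeas l μ A ≤ 1 := by
  have h1 := Pos_le_one hμ A
  have h2 := Pos_nonneg hμ Aᶜ
  unfold mMeas Nec; nlinarith [hl.1, hl.2]


lemma trap_mem {r1 r2 r3 r4 : ℝ} (h12 : r1 < r2) (h34 : r3 < r4) (x : ℝ) :
    trapMF r1 r2 r3 r4 x ∈ Set.Icc (0:ℝ) 1 := by
  unfold trapMF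
  split_ifs with h h' h''
  · constructor
    · apply div_nonneg <;> linarith [h.1, h.2]
    · rw [div_le_one (by linarith)]; linarith [h.2]
  · exact ⟨zero_le_one, le_refl 1⟩
  · constructor
    · apply div_nonneg <;> linarith [h''.1, h''.2]
    · rw [div_le_one (by linarith)]; linarith [h''.1]
  · exact ⟨le_refl 0, zero_le_one⟩

lemma trap_r2 {r1 r2 r3 r4 : ℝ} (h12 : r1 < r2) : trapMF r1 r2 r3 r4 r2 = 1 := by
  unfold trapMF
  rw [if_pos ⟨h12.le, le_refl r2⟩]
  exact div_self (by linarith)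

lemma trap_zero_of_lt {r1 r2 r3 r4 : ℝ} (h12 : r1 < r2) (h23 : r2 ≤ r3) {x : ℝ}
    (hx : x < r1) : trapMF r1 r2 r3 r4 x = 0 := by
  unfold trapMF
  rw [if_neg (by push_neg; intro h; linarith), if_neg (by push_neg; intro h; linarith),
      if_neg (by push_neg; intro h; linarith)]

lemma mMeas_trap_Iic_zero {r1 r2 r3 r4 l t : ℝ} (h12 : r1 < r2) (h23 : r2 ≤ r3)
    (h34 : r3 < r4) (ht : t < r1) :
    mMeas l (trapMF r1 r2 r3 r4) (Set.Iic t) = 0 := by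
  have hμ := trap_mem h12 h34 (r3 := r3)
  have hP : Pos (trapMF r1 r2 r3 r4) (Set.Iic t) = 0 := by
    refine le_antisymm (Real.sSup_le ?_ le_rfl) (Pos_nonneg hμ _)
    rintro _ ⟨x, hx, rfl⟩
    exact (trap_zero_of_lt h12 h23 (lt_of_le_of_lt hx ht)).le
  have hPc : Pos (trapMF r1 r2 r3 r4) (Set.Iic t)ᶜ = 1 := by
    refine le_antisymm (Pos_le_one hμ _) ?_
    exact one_le_Pos hμ (trap_r2 h12) (by simp; linarith)
  unfold mMeas Nec
  rw [hP, hPc]; ring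

lemma trap_integrable {r1 r2 r3 r4 l : ℝ} (h0 : 0 < r1) (h12 : r1 < r2) (h23 : r2 ≤ r3)
    (h34 : r3 < r4) (hl : l ∈ Set.Icc (0:ℝ) 1) :
    IntegrableOn (fun r => mMeas l (trapMF r1 r2 r3 r4) (Set.Iic (1/r))) (Set.Ioi (0:ℝ)) := by
  have hμ : ∀ x, trapMF r1 r2 r3 r4 x ∈ Set.Icc (0:ℝ) 1 := trap_mem h12 h34
  set F : ℝ → ℝ := fun r => if r ≤ 0 then 1 else mMeas l (trapMF r1 r2 r3 r4) (Set.Iic (1/r))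
    with hF
  have hanti : Antitone F := by
    intro a b hab
    by_cases hb : b ≤ 0
    · have ha : a ≤ 0 := hab.trans hb
      simp [hF, ha, hb]
    · by_cases ha : a ≤ 0
      · simp only [hF, if_pos ha, if_neg hb]
        exact mMeas_le_one hμ hl
      · simp only [hF, if_neg ha, if_neg hb]
        push_neg at ha hb
        exact mMeas_mono_set hμ (Set.Iic_subset_Iic.2
          (one_div_le_one_div_of_le ha hab)) hl
  have hmeasF : Measurable F := hanti.measurable
  have hF01 : ∀ r, F r ∈ Set.Icc (0:ℝ) 1 := by
    intro r; by_cases hr : r ≤ 0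
    · simp [hF, hr]
    · simp only [hF, if_neg hr]; exact ⟨mMeas_nonneg hμ hl, mMeas_le_one hμ hl⟩
  have hI1 : IntegrableOn F (Set.Ioc 0 (1/r1)) := by
    refine Integrable.mono' (integrable_const 1) hmeasF.aestronglyMeasurable ?_
    filter_upwards with r
    rw [Real.norm_eq_abs, abs_le]
    exact ⟨by linarith [(hF01 r).1], (hF01 r).2⟩
  have hI2 : IntegrableOn F (Set.Ioi (1/r1)) := by
    refine (integrableOn_zero).congr_fun ?_ measurableSet_Ioi
    intro r hr
    simp only [Set.mem_Ioi] at hr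
    have hr0 : 0 < r := lt_trans (by positivity) hr
    have h1r : 1/r < r1 := by
      have h := one_div_lt_one_div_of_lt (by positivity : (0:ℝ) < 1/r1) hr
      rwa [one_div_one_div] at h
    simp only [hF]
    rw [if_neg (not_le.2 hr0)]
    exact (mMeas_trap_Iic_zero h12 h23 h34 h1r).symm
  have hIF : IntegrableOn F (Set.Ioi (0:ℝ)) := by
    refine (hI1.union hI2).mono_set ?_
    intro r hr
    rcases le_or_gt r (1/r1) with h | h
    · exact Or.inl ⟨hr, h⟩
    · exact Or.inr h
  refine hIF.congr_fun ?_ measurableSet_Ioi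
  intro r hr
  simp only [hF]
  rw [if_neg (not_le.2 hr)]

theorem stmt_15 (r1 r2 r3 r4 l1 l2 : ℝ)
    (h0 : 0 < r1) (h12 : r1 < r2) (h23 : r2 ≤ r3) (h34 : r3 < r4)
    (hl1 : l1 ∈ Set.Icc (0:ℝ) 1) (hl2 : l2 ∈ Set.Icc (0:ℝ) 1) (hle : l1 ≤ l2) :
    (∫ r in Set.Ioi (0:ℝ), mMeas l1 (trapMF r1 r2 r3 r4) (Set.Iic (1 / r))) ≤
      (∫ r in Set.Ioi (0:ℝ), mMeas l2 (trapMF r1 r2 r3 r4) (Set.Iic (1 / r))) ∧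
    l1 / (r2 - r1) * Real.log (r2 / r1) + (1 - l1) / (r4 - r3) * Real.log (r4 / r3) ≤
      l2 / (r2 - r1) * Real.log (r2 / r1) + (1 - l2) / (r4 - r3) * Real.log (r4 / r3) ∧
    1 / (r4 - r3) * Real.log (r4 / r3) ≤ 1 / (r2 - r1) * Real.log (r2 / r1) := by
  have hμ : ∀ x, trapMF r1 r2 r3 r4 x ∈ Set.Icc (0:ℝ) 1 := trap_mem h12 h34
  have hr2 : (0:ℝ) < r2 := h0.trans h12
  have hr3 : (0:ℝ) < r3 := lt_of_lt_of_le hr2 h23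
  have hA : (r2 - r1)/r2 ≤ Real.log (r2/r1) := by
    have h := Real.log_le_sub_one_of_pos (show (0:ℝ) < r1/r2 by positivity)
    rw [Real.log_div (ne_of_gt h0) (ne_of_gt hr2)] at h
    rw [Real.log_div (ne_of_gt hr2) (ne_of_gt h0)]
    have e : (r2 - r1)/r2 = 1 - r1/r2 := by
      rw [sub_div, div_self hr2.ne']
    linarith
  have hB : Real.log (r4/r3) ≤ (r4 - r3)/r3 := by
    have h := Real.log_le_sub_one_of_pos (div_pos (hr3.trans h34) hr3)
    have e : (r4 - r3)/r3 = r4/r3 - 1 := by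
      rw [sub_div, div_self hr3.ne']
    linarith
  have part3 : 1/(r4-r3) * Real.log (r4/r3) ≤ 1/(r2-r1) * Real.log (r2/r1) := by
    have s1 : 1/(r4-r3) * Real.log (r4/r3) ≤ 1/(r4-r3) * ((r4-r3)/r3) :=
      mul_le_mul_of_nonneg_left hB (le_of_lt (one_div_pos.2 (sub_pos.2 h34)))
    have e1 : 1/(r4-r3) * ((r4-r3)/r3) = 1/r3 := by
      field_simp
      rw [div_self (ne_of_gt (sub_pos.2 h34))]
    have s2 : 1/(r2-r1) * ((r2-r1)/r2) ≤ 1/(r2-r1) * Real.log (r2/r1) :=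
      mul_le_mul_of_nonneg_left hA (le_of_lt (one_div_pos.2 (sub_pos.2 h12)))
    have e2 : 1/(r2-r1) * ((r2-r1)/r2) = 1/r2 := by
      field_simp
      rw [div_self (ne_of_gt (sub_pos.2 h12))]
    have s3 : 1/r3 ≤ 1/r2 := one_div_le_one_div_of_le hr2 h23
    linarith
  refine ⟨?_, ?_, part3⟩
  · exact setIntegral_mono_on (trap_integrable h0 h12 h23 h34 hl1)
      (trap_integrable h0 h12 h23 h34 hl2) measurableSet_Ioi
      (fun r _ => mMeas_mono_l hμ hle (trap_r2 h12))
  · have key := mul_le_mul_of_nonneg_left part3 (sub_nonneg.2 hle)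
    have expand : ∀ l : ℝ, l / (r2 - r1) * Real.log (r2 / r1) +
        (1 - l) / (r4 - r3) * Real.log (r4 / r3) =
        l * (1/(r2-r1) * Real.log (r2/r1)) - l * (1/(r4-r3) * Real.log (r4/r3)) +
        1/(r4-r3) * Real.log (r4/r3) := by
      intro l; ring
    rw [expand l1, expand l2]
    nlinarith [key]
end
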